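/- Let Γ be a type and ℓ₀ : Γ → ℝ a function with ℓ₀(γ) > 0 for all γ, with {γ : ℓ₀(γ) ≤ T} finite for every T, and with exponential growth rate h(ℓ₀) finite and strictly positive. Let (ℓ_t)_{t ∈ (0,1)} be a family of functions Γ → ℝ and ε : (0,1) → ℝ a function with 0 ≤ ε(t) < 1 such that |ℓ_t(γ) − ℓ₀(γ)| ≤ ε(t)·ℓ₀(γ) for all γ and t, and such that ε(t)/t → 0 as t → 0⁺. Then (h(ℓ_t) − h(ℓ₀))/t → 0 as t → 0⁺; in particular, the one-sided derivative of t ↦ h(ℓ_t) at t = 0 exists and equals 0. -/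

import Mathlib

/-- The exponential growth rate (topological entropy) of a positive "length" function
`ℓ : Γ → ℝ`: `h(ℓ) := limsup_{T → ∞} (1/T) · log #{γ : ℓ γ ≤ T}`, valued in `[0, ∞]`. -/
noncomputable def growthRate {Γ : Type*} (ℓ : Γ → ℝ) : ENNReal :=
  Filter.limsup
    (fun T : ℝ => ENNReal.ofReal (Real.log (Nat.card {γ : Γ // ℓ γ ≤ T} : ℝ) / T))
    Filter.atTop

open Filter in
/-- Monotonicity: a pointwise larger length function has smaller growth rate,
provided the smaller one has finite sublevel sets. -/
lemma growthRate_anti {Γ : Type*} {ℓ ℓ' : Γ → ℝ}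
    (hfin : ∀ T : ℝ, {γ : Γ | ℓ γ ≤ T}.Finite)
    (hle : ∀ γ, ℓ γ ≤ ℓ' γ) : growthRate ℓ' ≤ growthRate ℓ := by
  refine Filter.limsup_le_limsup (Filter.Eventually.of_forall fun T => ?_)
  rcases le_or_gt T 0 with hT | hT
  · have h1 : Real.log (Nat.card {γ : Γ // ℓ' γ ≤ T}) / T ≤ 0 :=
      div_nonpos_of_nonneg_of_nonpos (Real.log_natCast_nonneg _) hT
    simp [ENNReal.ofReal_of_nonpos h1]
  · apply ENNReal.ofReal_le_ofReal
    have hsub : {γ : Γ | ℓ' γ ≤ T} ⊆ {γ : Γ | ℓ γ ≤ T} := fun γ hγ =>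
      le_trans (hle γ) hγ
    have hcard : (Nat.card {γ : Γ // ℓ' γ ≤ T}) ≤ Nat.card {γ : Γ // ℓ γ ≤ T} :=
      Nat.card_mono (hfin T) hsub
    have hlog : Real.log (Nat.card {γ : Γ // ℓ' γ ≤ T}) ≤
        Real.log (Nat.card {γ : Γ // ℓ γ ≤ T}) := by
      rcases Nat.eq_zero_or_pos (Nat.card {γ : Γ // ℓ' γ ≤ T}) with h0 | h0
      · rw [h0]; simpa using Real.log_natCast_nonneg _
      · exact Real.log_le_log (by exact_mod_cast h0) (by exact_mod_cast hcard)
    exact div_le_div_of_nonneg_right hlog hT.le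

open Filter in
lemma map_div_const_atTop {c : ℝ} (hc : 0 < c) :
    Filter.map (fun T : ℝ => T / c) Filter.atTop = Filter.atTop := by
  apply le_antisymm
  · exact (tendsto_id.atTop_div_const hc)
  · have h2 : Tendsto (fun S : ℝ => S * c) atTop atTop :=
      Tendsto.atTop_mul_const hc tendsto_id
    calc atTop = Filter.map ((fun T : ℝ => T / c) ∘ fun S : ℝ => S * c) Filter.atTop := by
          have : ((fun T : ℝ => T / c) ∘ fun S : ℝ => S * c) = id := by
            funext S; simp [Function.comp, mul_div_cancel_right₀ _ hc.ne']
          rw [this, Filter.map_id]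
      _ = Filter.map (fun T : ℝ => T / c) (Filter.map (fun S : ℝ => S * c) Filter.atTop) :=
          (Filter.map_map).symm
      _ ≤ Filter.map (fun T : ℝ => T / c) Filter.atTop := Filter.map_mono h2

open Filter in
/-- Scaling: the growth rate of `c • ℓ` is `(1/c)` times that of `ℓ`. -/
lemma growthRate_smul {Γ : Type*} (ℓ : Γ → ℝ) {c : ℝ} (hc : 0 < c) :
    growthRate (fun γ => c * ℓ γ) = ENNReal.ofReal (1 / c) * growthRate ℓ := by
  have hset : ∀ T : ℝ, {γ : Γ | c * ℓ γ ≤ T} = {γ : Γ | ℓ γ ≤ T / c} := by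
    intro T; ext γ; simp [le_div_iff₀' hc]
  have key : (fun T : ℝ =>
      ENNReal.ofReal (Real.log (Nat.card {γ : Γ // c * ℓ γ ≤ T} : ℝ) / T)) =
      (fun T : ℝ => ENNReal.ofReal (1 / c) *
        ENNReal.ofReal (Real.log (Nat.card {γ : Γ // ℓ γ ≤ T} : ℝ) / T)) ∘
        (fun T : ℝ => T / c) := by
    funext T
    have hcard : Nat.card {γ : Γ // c * ℓ γ ≤ T} = Nat.card {γ : Γ // ℓ γ ≤ T / c} := by
      congr 1
      exact congrArg _ (by ext γ; simp [le_div_iff₀' hc])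
    have harith : Real.log (Nat.card {γ : Γ // ℓ γ ≤ T / c} : ℝ) / T =
        (1 / c) * (Real.log (Nat.card {γ : Γ // ℓ γ ≤ T / c} : ℝ) / (T / c)) := by
      rcases eq_or_ne T 0 with rfl | hT
      · simp
      · generalize Real.log (Nat.card {γ : Γ // ℓ γ ≤ T / c} : ℝ) = L
        field_simp
    simp only [Function.comp, hcard, harith]
    rw [ENNReal.ofReal_mul (by positivity)]
  unfold growthRate
  rw [key]
  rw [show ((fun T : ℝ => ENNReal.ofReal (1 / c) *
        ENNReal.ofReal (Real.log (Nat.card {γ : Γ // ℓ γ ≤ T} : ℝ) / T)) ∘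
        (fun T : ℝ => T / c)) = ((fun T : ℝ => ENNReal.ofReal (1 / c) *
        ENNReal.ofReal (Real.log (Nat.card {γ : Γ // ℓ γ ≤ T} : ℝ) / T))) ∘
        (fun T : ℝ => T / c) from rfl]
  rw [Filter.limsup_comp, map_div_const_atTop hc]
  exact ENNReal.limsup_const_mul_of_ne_top ENNReal.ofReal_ne_top

/-- If `|ℓ_t − ℓ₀| ≤ ε(t)·ℓ₀` pointwise with `0 ≤ ε(t) < 1` and `ε(t)/t → 0` as `t → 0⁺`,
and `h(ℓ₀)` is finite and positive, then `(h(ℓ_t) − h(ℓ₀))/t → 0` as `t → 0⁺`; in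
particular the one-sided derivative of `t ↦ h(ℓ_t)` at `t = 0` exists and equals `0`. -/
theorem growthRate_deriv_zero {Γ : Type*} (ℓ₀ : Γ → ℝ)
    (hpos : ∀ γ, 0 < ℓ₀ γ)
    (hfin : ∀ T : ℝ, {γ : Γ | ℓ₀ γ ≤ T}.Finite)
    (h0pos : 0 < growthRate ℓ₀) (h0fin : growthRate ℓ₀ < ⊤)
    (ℓ : ℝ → Γ → ℝ) (ε : ℝ → ℝ)
    (hε : ∀ t ∈ Set.Ioo (0 : ℝ) 1, 0 ≤ ε t ∧ ε t < 1)
    (hcomp : ∀ t ∈ Set.Ioo (0 : ℝ) 1, ∀ γ, |ℓ t γ - ℓ₀ γ| ≤ ε t * ℓ₀ γ)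
    (hεlim : Filter.Tendsto (fun t : ℝ => ε t / t) (nhdsWithin 0 (Set.Ioi 0)) (nhds 0)) :
    Filter.Tendsto
      (fun t : ℝ => ((growthRate (ℓ t)).toReal - (growthRate ℓ₀).toReal) / t)
      (nhdsWithin 0 (Set.Ioi 0)) (nhds 0) := by
  set H : ℝ := (growthRate ℓ₀).toReal with hH
  have hHpos : 0 < H := ENNReal.toReal_pos h0pos.ne' h0fin.ne
  -- key pointwise bound for t ∈ Ioo 0 1 with ε t ≤ 1/2
  have key : ∀ t ∈ Set.Ioo (0 : ℝ) 1, ε t ≤ 1/2 →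
      |((growthRate (ℓ t)).toReal - H) / t| ≤ 2 * H * (ε t / t) := by
    intro t ht hhalf
    obtain ⟨hε0, hε1⟩ := hε t ht
    set e := ε t with he
    have h1e : 0 < 1 - e := by linarith
    -- pointwise sandwich
    have hlow : ∀ γ, (1 - e) * ℓ₀ γ ≤ ℓ t γ := by
      intro γ
      have := abs_le.mp (hcomp t ht γ)
      nlinarith [this.1]
    have hhigh : ∀ γ, ℓ t γ ≤ (1 + e) * ℓ₀ γ := by
      intro γ
      have := abs_le.mp (hcomp t ht γ)
      nlinarith [this.2]
    -- finiteness of sublevel sets of (1-e)•ℓ₀ and of ℓ t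
    have hfin1 : ∀ T : ℝ, {γ : Γ | (1 - e) * ℓ₀ γ ≤ T}.Finite := by
      intro T
      have : {γ : Γ | (1 - e) * ℓ₀ γ ≤ T} = {γ : Γ | ℓ₀ γ ≤ T / (1 - e)} := by
        ext γ; simp [le_div_iff₀' h1e]
      rw [this]; exact hfin _
    have hfint : ∀ T : ℝ, {γ : Γ | ℓ t γ ≤ T}.Finite := by
      intro T
      exact (hfin1 T).subset fun γ hγ => le_trans (hlow γ) hγ
    -- entropy sandwich
    have hup : growthRate (ℓ t) ≤ ENNReal.ofReal (1 / (1 - e)) * growthRate ℓ₀ := by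
      rw [← growthRate_smul ℓ₀ h1e]
      exact growthRate_anti hfin1 hlow
    have hdown : ENNReal.ofReal (1 / (1 + e)) * growthRate ℓ₀ ≤ growthRate (ℓ t) := by
      rw [← growthRate_smul ℓ₀ (by linarith : (0:ℝ) < 1 + e)]
      exact growthRate_anti hfint hhigh
    have htfin : growthRate (ℓ t) < ⊤ :=
      lt_of_le_of_lt hup (ENNReal.mul_lt_top ENNReal.ofReal_lt_top h0fin)
    -- pass to toReal
    have hupR : (growthRate (ℓ t)).toReal ≤ (1 / (1 - e)) * H := by
      have := ENNReal.toReal_mono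
        (ENNReal.mul_ne_top ENNReal.ofReal_ne_top h0fin.ne) hup
      rwa [ENNReal.toReal_mul, ENNReal.toReal_ofReal (by positivity)] at this
    have hdownR : (1 / (1 + e)) * H ≤ (growthRate (ℓ t)).toReal := by
      have := ENNReal.toReal_mono htfin.ne hdown
      rwa [ENNReal.toReal_mul, ENNReal.toReal_ofReal (by positivity)] at this
    -- |h_t - H| ≤ 2 H e
    have habs : |(growthRate (ℓ t)).toReal - H| ≤ 2 * H * e := by
      rw [abs_le]
      constructor
      · have : (1 / (1 + e)) * H ≥ H - 2 * H * e := by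
          rw [ge_iff_le, div_mul_eq_mul_div, le_div_iff₀ (by linarith : (0:ℝ) < 1 + e)]
          nlinarith [mul_nonneg hHpos.le hε0, mul_nonneg (mul_nonneg hHpos.le hε0) hε0]
        linarith
      · have : (1 / (1 - e)) * H ≤ H + 2 * H * e := by
          rw [div_mul_eq_mul_div, div_le_iff₀ h1e]
          nlinarith [mul_nonneg (mul_nonneg hHpos.le hε0) (by linarith : (0:ℝ) ≤ 1 - 2 * e)]
        linarith
    have ht0 : 0 < t := ht.1
    rw [abs_div, abs_of_pos ht0, div_le_iff₀ ht0]
    calc |(growthRate (ℓ t)).toReal - H| ≤ 2 * H * e := habs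
      _ = 2 * H * (e / t) * t := by field_simp
  -- ε t → 0, hence eventually ε t ≤ 1/2
  have hεto0 : Filter.Tendsto ε (nhdsWithin 0 (Set.Ioi 0)) (nhds 0) := by
    have hid : Filter.Tendsto (fun t : ℝ => t) (nhdsWithin 0 (Set.Ioi 0)) (nhds 0) :=
      tendsto_nhdsWithin_of_tendsto_nhds Filter.tendsto_id
    have := hεlim.mul hid
    rw [zero_mul] at this
    refine this.congr' ?_
    filter_upwards [self_mem_nhdsWithin] with t (ht : t ∈ Set.Ioi 0)
    exact div_mul_cancel₀ _ (ne_of_gt ht)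
  have hev1 : ∀ᶠ t in nhdsWithin (0:ℝ) (Set.Ioi 0), t ∈ Set.Ioo (0:ℝ) 1 := by
    have h1 : Set.Iio (1:ℝ) ∈ nhds (0:ℝ) := Iio_mem_nhds one_pos
    filter_upwards [self_mem_nhdsWithin, mem_nhdsWithin_of_mem_nhds h1]
      with t ht1 ht2
    exact ⟨ht1, ht2⟩
  have hev2 : ∀ᶠ t in nhdsWithin (0:ℝ) (Set.Ioi 0), ε t ≤ 1/2 := by
    have := hεto0.eventually (ge_mem_nhds (by norm_num : (0:ℝ) < 1/2))
    filter_upwards [this] with t ht using ht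
  -- squeeze
  have hbound : Filter.Tendsto (fun t : ℝ => 2 * H * (ε t / t))
      (nhdsWithin 0 (Set.Ioi 0)) (nhds 0) := by
    have := hεlim.const_mul (2 * H)
    simpa using this
  refine squeeze_zero_norm' ?_ hbound
  filter_upwards [hev1, hev2] with t ht hhalf
  exact key t ht hhalf
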